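/- Let d ≥ 1, ν > 1 and c₀ ∈ (0,1]. Then there exists c > 0, depending on d, ν, c₀, such that for every f ∈ L¹(ℝ^d) whose Fourier transform satisfies |f̂(ξ)| ≥ c₀ for all |ξ| ≤ c₀, and for all λ, δ with 0 < λ ≤ δ and c₀ λ^{-1} δ ≥ 2, the function h(x) := λ^{-4/(ν-1)} f(λ^{-1} δ x) satisfies ‖h‖_{H^{-d/2}} ≥ c λ^{-4/(ν-1)} (λ δ^{-1})^d ( log(c₀ λ^{-1} δ) )^{1/2}. -/

import Mathlib

open MeasureTheory Real Complex Metric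
open scoped FourierTransform ENNReal SchwartzMap RealInnerProductSpace

/-- The Sobolev norm `‖f‖_{H^γ} = (∫ (1+|ξ|²)^γ |f̂(ξ)|² dξ)^{1/2}`, valued in `[0,∞]`. -/
noncomputable def sobNorm {d : ℕ} (γ : ℝ) (f : EuclideanSpace ℝ (Fin d) → ℂ) : ℝ≥0∞ :=
  (∫⁻ ξ : EuclideanSpace ℝ (Fin d),
      ENNReal.ofReal ((1 + ‖ξ‖ ^ 2) ^ γ) * (‖𝓕 f ξ‖₊ : ℝ≥0∞) ^ (2 : ℝ)) ^ ((1 : ℝ) / 2)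

lemma fourier_comp_smul {d : ℕ} (f : EuclideanSpace ℝ (Fin d) → ℂ) {s : ℝ} (hs : 0 < s)
    (ξ : EuclideanSpace ℝ (Fin d)) :
    𝓕 (fun x => f (s • x)) ξ = ((s ^ d)⁻¹ : ℝ) • 𝓕 f (s⁻¹ • ξ) := by
  rw [Real.fourier_eq, Real.fourier_eq]
  have h1 : ∀ x : EuclideanSpace ℝ (Fin d),
      𝐞 (-⟪x, ξ⟫) • f (s • x) = (fun v => 𝐞 (-⟪v, s⁻¹ • ξ⟫) • f v) (s • x) := by
    intro x
    simp only [real_inner_smul_left, real_inner_smul_right]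
    rw [← mul_assoc, inv_mul_cancel₀ hs.ne', one_mul]
  calc ∫ v : EuclideanSpace ℝ (Fin d), 𝐞 (-⟪v, ξ⟫) • f (s • v)
      = ∫ v : EuclideanSpace ℝ (Fin d), (fun w => 𝐞 (-⟪w, s⁻¹ • ξ⟫) • f w) (s • v) := by
        simp_rw [h1]
    _ = |(s ^ Module.finrank ℝ (EuclideanSpace ℝ (Fin d)))⁻¹| •
          ∫ w : EuclideanSpace ℝ (Fin d), 𝐞 (-⟪w, s⁻¹ • ξ⟫) • f w :=
        MeasureTheory.Measure.integral_comp_smul volume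
          (fun w : EuclideanSpace ℝ (Fin d) => 𝐞 (-⟪w, s⁻¹ • ξ⟫) • f w) s
    _ = ((s ^ d)⁻¹ : ℝ) • ∫ w : EuclideanSpace ℝ (Fin d), 𝐞 (-⟪w, s⁻¹ • ξ⟫) • f w := by
        rw [finrank_euclideanSpace, Fintype.card_fin,
          _root_.abs_of_nonneg (by positivity : (0:ℝ) ≤ (s ^ d)⁻¹)]

lemma annulus_integral {d : ℕ} (hd : 1 ≤ d) {R : ℝ} (hR : 2 ≤ R) :
    ∫ x in {x : EuclideanSpace ℝ (Fin d) | ‖x‖ ∈ Set.Icc 1 R}, ‖x‖ ^ (-(d:ℝ)) =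
      d * (volume (ball (0:EuclideanSpace ℝ (Fin d)) 1)).toReal * Real.log R := by
  haveI : Nonempty (Fin d) := ⟨⟨0, hd⟩⟩
  haveI : Nontrivial (EuclideanSpace ℝ (Fin d)) := inferInstance
  have hdim : Module.finrank ℝ (EuclideanSpace ℝ (Fin d)) = d := by
    rw [finrank_euclideanSpace, Fintype.card_fin]
  have key := MeasureTheory.integral_fun_norm_addHaar
      (volume : Measure (EuclideanSpace ℝ (Fin d)))
      (Set.indicator (Set.Icc 1 R) (fun y : ℝ => y ^ (-(d:ℝ))))
  rw [hdim] at key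
  have hL : (∫ x : EuclideanSpace ℝ (Fin d),
        Set.indicator (Set.Icc 1 R) (fun y : ℝ => y ^ (-(d:ℝ))) ‖x‖)
      = ∫ x in {x : EuclideanSpace ℝ (Fin d) | ‖x‖ ∈ Set.Icc 1 R}, ‖x‖ ^ (-(d:ℝ)) := by
    rw [show {x : EuclideanSpace ℝ (Fin d) | ‖x‖ ∈ Set.Icc 1 R}
        = (fun x : EuclideanSpace ℝ (Fin d) => ‖x‖) ⁻¹' Set.Icc 1 R from rfl,
      ← integral_indicator (measurableSet_Icc.preimage measurable_norm)]
    congr 1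
  have hrad : (∫ y in Set.Ioi (0:ℝ),
        y ^ (d - 1) • Set.indicator (Set.Icc 1 R) (fun y : ℝ => y ^ (-(d:ℝ))) y)
      = Real.log R := by
    have h1 : (fun y : ℝ => y ^ (d - 1) •
          Set.indicator (Set.Icc 1 R) (fun y : ℝ => y ^ (-(d:ℝ))) y)
        = Set.indicator (Set.Icc 1 R) (fun y : ℝ => y⁻¹) := by
      funext y
      by_cases hy : y ∈ Set.Icc 1 R
      · rw [Set.indicator_of_mem hy, Set.indicator_of_mem hy]
        have hy0 : (0:ℝ) < y := lt_of_lt_of_le one_pos hy.1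
        rw [smul_eq_mul, ← Real.rpow_natCast y (d-1), ← Real.rpow_add hy0,
          show ((d-1:ℕ):ℝ) + (-(d:ℝ)) = -1 by push_cast [Nat.cast_sub hd]; ring,
          Real.rpow_neg_one]
      · rw [Set.indicator_of_notMem hy, Set.indicator_of_notMem hy, smul_zero]
    have hsub : Set.Icc (1:ℝ) R ⊆ Set.Ioi 0 := fun y hy => lt_of_lt_of_le one_pos hy.1
    rw [h1, integral_indicator measurableSet_Icc,
      Measure.restrict_restrict measurableSet_Icc,
      Set.inter_eq_left.mpr hsub,
      integral_Icc_eq_integral_Ioc, ← intervalIntegral.integral_of_le (by linarith : (1:ℝ) ≤ R),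
      integral_inv_of_pos one_pos (by linarith), div_one]
  rw [hL] at key
  rw [key, hrad, nsmul_eq_mul, smul_eq_mul, mul_assoc]
  rfl

set_option maxHeartbeats 1000000 in
/-- logarithmic lower bound for the `H^{-d/2}` norm of the rescaled
function `h(x) = λ^{-4/(ν-1)} f(λ^{-1}δx)` when `|f̂| ≥ c₀` on the ball of radius `c₀`. -/
theorem stmt16 (d : ℕ) (hd : 1 ≤ d) (ν : ℝ) (hν : 1 < ν)
    (c₀ : ℝ) (hc₀ : c₀ ∈ Set.Ioc (0 : ℝ) 1) :
    ∃ c > (0 : ℝ), ∀ f : EuclideanSpace ℝ (Fin d) → ℂ,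
      MeasureTheory.Integrable f →
      (∀ ξ : EuclideanSpace ℝ (Fin d), ‖ξ‖ ≤ c₀ → c₀ ≤ ‖𝓕 f ξ‖) →
      ∀ l δ : ℝ, 0 < l → l ≤ δ → 2 ≤ c₀ * l⁻¹ * δ →
        ENNReal.ofReal (c * l ^ (-(4 / (ν - 1))) * (l * δ⁻¹) ^ (d : ℝ) *
            Real.log (c₀ * l⁻¹ * δ) ^ ((1 : ℝ) / 2)) ≤
          sobNorm (-(d : ℝ) / 2) (fun x => (l ^ (-(4 / (ν - 1))) : ℝ) • f ((l⁻¹ * δ) • x)) := by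
  obtain ⟨hc₀0, hc₀1⟩ := hc₀
  haveI : Nonempty (Fin d) := ⟨⟨0, hd⟩⟩
  set Cd : ℝ := d * (volume (ball (0:EuclideanSpace ℝ (Fin d)) 1)).toReal with hCd_def
  have hball : 0 < (volume (ball (0:EuclideanSpace ℝ (Fin d)) 1)).toReal :=
    ENNReal.toReal_pos (measure_ball_pos volume 0 one_pos).ne' measure_ball_lt_top.ne
  have hCd : 0 < Cd := mul_pos (by exact_mod_cast Nat.pos_of_ne_zero (by omega)) hball
  set c : ℝ := c₀ * ((2:ℝ) ^ (-(d:ℝ)/2) * Cd) ^ ((1:ℝ)/2) with hc_def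
  have hc : 0 < c := mul_pos hc₀0
    (Real.rpow_pos_of_pos (mul_pos (Real.rpow_pos_of_pos two_pos _) hCd) _)
  refine ⟨c, hc, ?_⟩
  intro f hf hf2 l δ hl hlδ h2
  have hδ : 0 < δ := hl.trans_le hlδ
  set s : ℝ := l⁻¹ * δ with hs_def
  have hs : 0 < s := mul_pos (inv_pos.mpr hl) hδ
  set R : ℝ := c₀ * s with hR_def
  have hRe : c₀ * l⁻¹ * δ = R := by rw [hR_def, hs_def]; ring
  have hR2 : 2 ≤ R := by rw [← hRe]; exact h2
  have hRpos : 0 < R := by linarith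
  have hRs : R ≤ s := by nlinarith
  have hlog : 0 < Real.log R := Real.log_pos (by linarith)
  set A' : ℝ := l ^ (-(4/(ν-1))) with hA'_def
  have hA' : 0 < A' := Real.rpow_pos_of_pos hl _
  have hsd : (0:ℝ) < (s ^ d)⁻¹ := by positivity
  set K : ℝ := A' * (s ^ d)⁻¹ * c₀ with hK_def
  have hK : 0 < K := by positivity
  -- lower bound on the Fourier transform of the rescaled function
  have hFh : ∀ ξ : EuclideanSpace ℝ (Fin d),
      𝓕 (fun x => A' • f (s • x)) ξ = (A' : ℂ) • (((s ^ d)⁻¹ : ℝ) • 𝓕 f (s⁻¹ • ξ)) := by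
    intro ξ
    have e1 : 𝓕 (fun x => A' • f (s • x)) ξ = (A' : ℂ) • 𝓕 (fun x => f (s • x)) ξ := by
      rw [Real.fourier_eq, Real.fourier_eq, ← integral_smul]
      congr 1
      funext x
      simp only [Circle.smul_def, Complex.real_smul, smul_eq_mul]
      ring
    rw [e1, fourier_comp_smul f hs ξ]
  have hlow : ∀ ξ : EuclideanSpace ℝ (Fin d), ‖ξ‖ ≤ R →
      K ≤ ‖𝓕 (fun x => A' • f (s • x)) ξ‖ := by
    intro ξ hξ
    have hnorm : ‖s⁻¹ • ξ‖ ≤ c₀ := by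
      rw [norm_smul, Real.norm_eq_abs, _root_.abs_of_pos (inv_pos.mpr hs)]
      calc s⁻¹ * ‖ξ‖ ≤ s⁻¹ * R := by gcongr
        _ = c₀ := by rw [hR_def]; field_simp
    have h3 := hf2 _ hnorm
    rw [hFh ξ, norm_smul, norm_smul, Complex.norm_real, Real.norm_eq_abs,
      Real.norm_eq_abs, _root_.abs_of_pos hA', _root_.abs_of_pos hsd, hK_def]
    rw [mul_assoc]
    gcongr
  -- the annulus
  set A : Set (EuclideanSpace ℝ (Fin d)) := {x | ‖x‖ ∈ Set.Icc 1 R} with hA_def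
  have hA_meas : MeasurableSet A := measurableSet_Icc.preimage measurable_norm
  have hA_fin : volume A ≠ ⊤ := by
    have hsub : A ⊆ closedBall (0 : EuclideanSpace ℝ (Fin d)) R :=
      fun x hx => mem_closedBall_zero_iff.mpr hx.2
    exact ((measure_mono hsub).trans_lt measure_closedBall_lt_top).ne
  have hint : IntegrableOn (fun ξ : EuclideanSpace ℝ (Fin d) => ‖ξ‖ ^ (-(d:ℝ))) A volume := by
    refine Measure.integrableOn_of_bounded (M := 1) hA_fin
      ((measurable_norm.pow measurable_const).aestronglyMeasurable) ?_
    filter_upwards [ae_restrict_mem hA_meas] with ξ hξ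
    rw [Real.norm_eq_abs, _root_.abs_of_pos
      (Real.rpow_pos_of_pos (lt_of_lt_of_le one_pos hξ.1) _)]
    exact Real.rpow_le_one_of_one_le_of_nonpos hξ.1 (neg_nonpos.mpr (Nat.cast_nonneg d))
  have hint2 : IntegrableOn
      (fun ξ : EuclideanSpace ℝ (Fin d) => K^2 * (2:ℝ) ^ (-(d:ℝ)/2) * ‖ξ‖ ^ (-(d:ℝ)))
      A volume := by
    exact hint.const_mul (K^2 * (2:ℝ) ^ (-(d:ℝ)/2))
  -- main lintegral lower bound
  have inner_le : ENNReal.ofReal (K^2 * ((2:ℝ) ^ (-(d:ℝ)/2) * (Cd * Real.log R)))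
      ≤ ∫⁻ ξ : EuclideanSpace ℝ (Fin d),
          ENNReal.ofReal ((1 + ‖ξ‖ ^ 2) ^ (-(d:ℝ) / 2)) *
            (‖𝓕 (fun x => A' • f (s • x)) ξ‖₊ : ℝ≥0∞) ^ (2 : ℝ) := by
    have e2 : K^2 * ((2:ℝ) ^ (-(d:ℝ)/2) * (Cd * Real.log R))
        = ∫ ξ in A, K^2 * (2:ℝ) ^ (-(d:ℝ)/2) * ‖ξ‖ ^ (-(d:ℝ)) := by
      rw [MeasureTheory.integral_const_mul, annulus_integral hd hR2]
      rw [hCd_def]; ring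
    rw [e2, ofReal_integral_eq_lintegral_ofReal hint2
      (ae_of_all _ fun ξ => by positivity)]
    refine le_trans ?_ (setLIntegral_le_lintegral A _)
    refine lintegral_mono_ae ?_
    filter_upwards [ae_restrict_mem hA_meas] with ξ hξ
    have hξ1 : (1:ℝ) ≤ ‖ξ‖ := hξ.1
    have hfac1 : (2:ℝ) ^ (-(d:ℝ)/2) * ‖ξ‖ ^ (-(d:ℝ)) ≤ (1 + ‖ξ‖ ^ 2) ^ (-(d:ℝ) / 2) := by
      have he : (2:ℝ) ^ (-(d:ℝ)/2) * ‖ξ‖ ^ (-(d:ℝ)) = (2 * ‖ξ‖^2) ^ (-(d:ℝ)/2) := by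
        rw [Real.mul_rpow two_pos.le (by positivity)]
        congr 1
        rw [← Real.rpow_natCast ‖ξ‖ 2, ← Real.rpow_mul (norm_nonneg ξ)]
        congr 1
        push_cast
        ring
      rw [he]
      refine Real.rpow_le_rpow_of_nonpos (by positivity) (by nlinarith) ?_
      have : (0:ℝ) < (d:ℝ) := by exact_mod_cast Nat.pos_of_ne_zero (by omega)
      linarith
    have hfac2 : ENNReal.ofReal (K^2)
        ≤ (‖𝓕 (fun x => A' • f (s • x)) ξ‖₊ : ℝ≥0∞) ^ (2 : ℝ) := by
      have hKle := hlow ξ hξ.2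
      calc ENNReal.ofReal (K^2)
          = ENNReal.ofReal (K ^ (2:ℝ)) := by
            rw [show (2:ℝ) = ((2:ℕ):ℝ) by norm_num, Real.rpow_natCast]
        _ = ENNReal.ofReal K ^ (2:ℝ) := (ENNReal.ofReal_rpow_of_nonneg hK.le (by norm_num)).symm
        _ ≤ (‖𝓕 (fun x => A' • f (s • x)) ξ‖₊ : ℝ≥0∞) ^ (2 : ℝ) := by
            refine ENNReal.rpow_le_rpow ?_ (by norm_num)
            rw [← enorm_eq_nnnorm, ← ofReal_norm]
            exact ENNReal.ofReal_le_ofReal hKle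
    calc ENNReal.ofReal (K^2 * (2:ℝ) ^ (-(d:ℝ)/2) * ‖ξ‖ ^ (-(d:ℝ)))
        = ENNReal.ofReal ((2:ℝ) ^ (-(d:ℝ)/2) * ‖ξ‖ ^ (-(d:ℝ))) * ENNReal.ofReal (K^2) := by
          rw [← ENNReal.ofReal_mul (by positivity)]; ring_nf
      _ ≤ ENNReal.ofReal ((1 + ‖ξ‖ ^ 2) ^ (-(d:ℝ) / 2)) *
            (‖𝓕 (fun x => A' • f (s • x)) ξ‖₊ : ℝ≥0∞) ^ (2 : ℝ) :=
          mul_le_mul' (ENNReal.ofReal_le_ofReal hfac1) hfac2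
  -- algebra identity
  have halg : c * A' * (l * δ⁻¹) ^ (d:ℝ) * Real.log R ^ ((1:ℝ)/2)
      = (K^2 * ((2:ℝ) ^ (-(d:ℝ)/2) * (Cd * Real.log R))) ^ ((1:ℝ)/2) := by
    have hld : l * δ⁻¹ = s⁻¹ := by rw [hs_def, mul_inv, inv_inv]
    have hld2 : (l * δ⁻¹) ^ (d:ℝ) = (s ^ d)⁻¹ := by
      rw [hld, Real.rpow_natCast, inv_pow]
    rw [hld2, ← Real.sqrt_eq_rpow, ← Real.sqrt_eq_rpow,
      show K^2 * ((2:ℝ) ^ (-(d:ℝ)/2) * (Cd * Real.log R))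
        = K^2 * (((2:ℝ) ^ (-(d:ℝ)/2) * Cd) * Real.log R) by ring,
      Real.sqrt_mul (by positivity), Real.sqrt_sq hK.le,
      Real.sqrt_mul (by positivity), hc_def, ← Real.sqrt_eq_rpow, hK_def]
    ring
  -- conclusion
  rw [hRe, hA'_def] at *
  rw [sobNorm]
  calc ENNReal.ofReal (c * l ^ (-(4/(ν-1))) * (l * δ⁻¹) ^ (d:ℝ) * Real.log R ^ ((1:ℝ)/2))
      = ENNReal.ofReal ((K^2 * ((2:ℝ) ^ (-(d:ℝ)/2) * (Cd * Real.log R))) ^ ((1:ℝ)/2)) := by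
        rw [halg]
    _ = ENNReal.ofReal (K^2 * ((2:ℝ) ^ (-(d:ℝ)/2) * (Cd * Real.log R))) ^ ((1:ℝ)/2) :=
        (ENNReal.ofReal_rpow_of_nonneg (by positivity) (by norm_num)).symm
    _ ≤ (∫⁻ ξ : EuclideanSpace ℝ (Fin d),
          ENNReal.ofReal ((1 + ‖ξ‖ ^ 2) ^ (-(d:ℝ) / 2)) *
            (‖𝓕 (fun x => l ^ (-(4/(ν-1))) • f (s • x)) ξ‖₊ : ℝ≥0∞) ^ (2 : ℝ)) ^ ((1:ℝ)/2) :=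
        ENNReal.rpow_le_rpow inner_le (by norm_num)
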